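/- Let M ≥ 2 and B > 0, let (ε_n)_{n≥0} be nonnegative integers with ε_n ≤ B, let μ := ∑_{n=0}^∞ 4^{-(n+1)} ε_n, and suppose M'·μ ∈ ℤ for some integer 1 ≤ M' ≤ M. Set m := ⌊ log(B·M²/3) / log 4 ⌋ (assume B·M²/3 ≥ 1) and μ₀ := ∑_{n=0}^{m} 4^{-(n+1)} ε_n. Then μ ∈ [μ₀, μ₀ + 1/M²], and μ is the unique fraction with denominator at most M in this interval. -/

import Mathlib

set_option maxHeartbeats 1600000 in
/-- Lemma "fast algo 2": under a bound `M ≥ 2` on the denominator of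
`μ = ∑ 4^{-(n+1)} ε_n` (integer-valued `ε_n ≤ B`), with
`m = ⌊log(B·M²/3)/log 4⌋` and `μ₀` the partial sum up to `m`, one has
`μ ∈ [μ₀, μ₀ + 1/M²]`, and `μ` is the unique fraction with denominator at most `M`
in this interval. -/
theorem fast_algo2
    (M : ℕ) (hM : 2 ≤ M) (B : ℝ) (hB : 0 < B)
    (ε : ℕ → ℕ) (hεB : ∀ n, (ε n : ℝ) ≤ B)
    (μ : ℝ) (hμ : μ = ∑' n : ℕ, (ε n : ℝ) / 4 ^ (n + 1))
    (M' : ℕ) (hM'1 : 1 ≤ M') (hM'2 : M' ≤ M)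
    (hint : ∃ k : ℤ, (M' : ℝ) * μ = (k : ℝ))
    (hBM : 1 ≤ B * M ^ 2 / 3)
    (m : ℕ) (hm : (m : ℤ) = ⌊Real.log (B * M ^ 2 / 3) / Real.log 4⌋)
    (μ₀ : ℝ) (hμ₀ : μ₀ = ∑ n ∈ Finset.range (m + 1), (ε n : ℝ) / 4 ^ (n + 1)) :
    (μ₀ ≤ μ ∧ μ ≤ μ₀ + 1 / (M : ℝ) ^ 2) ∧
      ∃ q : ℚ, (q : ℝ) = μ ∧ q.den ≤ M ∧
        ∀ q' : ℚ, q'.den ≤ M → μ₀ ≤ (q' : ℝ) → (q' : ℝ) ≤ μ₀ + 1 / (M : ℝ) ^ 2 →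
          q' = q := by
  have hMR : (0 : ℝ) < (M : ℝ) := by positivity
  set f : ℕ → ℝ := fun n => (ε n : ℝ) / 4 ^ (n + 1) with hf
  have hf0 : ∀ n, 0 ≤ f n := fun n => by positivity
  have hfle : ∀ n, f n ≤ (B / 4) * (1 / 4) ^ n := by
    intro n
    have : (B / 4) * (1 / 4 : ℝ) ^ n = B / 4 ^ (n + 1) := by
      rw [div_pow, one_pow, div_mul_div_comm, mul_one, ← pow_succ']
    rw [this]
    exact div_le_div_of_nonneg_right (hεB n) (by positivity)
  have hgsum : Summable (fun n : ℕ => (B / 4) * (1 / 4 : ℝ) ^ n) :=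
    (summable_geometric_of_lt_one (by norm_num) (by norm_num)).mul_left _
  have hsum : Summable f := Summable.of_nonneg_of_le hf0 hfle hgsum
  -- lower bound
  have h1 : μ₀ ≤ μ := by
    rw [hμ, hμ₀]
    exact Summable.sum_le_tsum (Finset.range (m + 1)) (fun i _ => hf0 i) hsum
  -- tail decomposition
  have hsplit : μ₀ + ∑' n : ℕ, f (n + (m + 1)) = μ := by
    rw [hμ, hμ₀]; exact Summable.sum_add_tsum_nat_add (m + 1) hsum
  -- geometric tail bound
  have hgeo : ∑' n : ℕ, (B / 4 ^ (m + 2)) * (1 / 4 : ℝ) ^ n = B / (3 * 4 ^ (m + 1)) := by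
    rw [tsum_mul_left, tsum_geometric_of_lt_one (by norm_num) (by norm_num)]
    rw [pow_succ]
    field_simp
    ring
  have htail : ∑' n : ℕ, f (n + (m + 1)) ≤ B / (3 * 4 ^ (m + 1)) := by
    rw [← hgeo]
    refine Summable.tsum_le_tsum (fun n => ?_) (hsum.comp_injective (add_left_injective (m + 1)))
      ((summable_geometric_of_lt_one (by norm_num) (by norm_num)).mul_left _)
    have h4 : (B / 4 ^ (m + 2)) * (1 / 4 : ℝ) ^ n = B / 4 ^ (n + (m + 1) + 1) := by
      rw [div_pow, one_pow]
      rw [div_mul_div_comm, mul_one, ← pow_add]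
      ring_nf
    rw [h4]
    exact div_le_div_of_nonneg_right (hεB _) (by positivity)
  -- the key strict inequality B/(3·4^(m+1)) < 1/M²
  have hBM0 : (0 : ℝ) < B * M ^ 2 / 3 := lt_of_lt_of_le one_pos hBM
  have hlog4 : (0 : ℝ) < Real.log 4 := Real.log_pos (by norm_num)
  have hflt : Real.log (B * M ^ 2 / 3) / Real.log 4 < (m : ℝ) + 1 := by
    have := Int.lt_floor_add_one (Real.log (B * M ^ 2 / 3) / Real.log 4)
    rw [← hm] at this
    exact_mod_cast this
  have hlt : B * M ^ 2 / 3 < 4 ^ (m + 1) := by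
    have h1' : Real.log (B * M ^ 2 / 3) < ((m : ℝ) + 1) * Real.log 4 := by
      rw [← div_lt_iff₀ hlog4] at *
      exact hflt
    have h2' : Real.log (B * M ^ 2 / 3) < Real.log ((4 : ℝ) ^ (m + 1)) := by
      rwa [Real.log_pow, Nat.cast_add, Nat.cast_one]
    exact (Real.log_lt_log_iff hBM0 (by positivity)).mp h2'
  have hkey : B / (3 * 4 ^ (m + 1)) < 1 / (M : ℝ) ^ 2 := by
    rw [div_lt_div_iff₀ (by positivity) (by positivity)]
    rw [div_lt_iff₀ (by norm_num : (0:ℝ) < 3)] at hlt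
    nlinarith [hlt]
  have h2s : μ < μ₀ + 1 / (M : ℝ) ^ 2 := by
    calc μ = μ₀ + ∑' n : ℕ, f (n + (m + 1)) := hsplit.symm
    _ ≤ μ₀ + B / (3 * 4 ^ (m + 1)) := by linarith [htail]
    _ < μ₀ + 1 / (M : ℝ) ^ 2 := by linarith [hkey]
  refine ⟨⟨h1, h2s.le⟩, ?_⟩
  obtain ⟨k, hk⟩ := hint
  have hM'R : (0 : ℝ) < (M' : ℝ) := by exact_mod_cast hM'1
  obtain ⟨q, hq⟩ : ∃ q : ℚ, q = (k : ℚ) / (M' : ℚ) := ⟨_, rfl⟩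
  have hqμ : (q : ℝ) = μ := by
    push_cast [hq]
    rw [eq_comm, eq_div_iff hM'R.ne']
    linarith [hk]
  have hqden : q.den ≤ M := by
    have hdvd : (q.den : ℤ) ∣ (M' : ℤ) := by
      have he : q = Rat.divInt k (M' : ℤ) := by rw [hq, Rat.divInt_eq_div]; push_cast; ring
      rw [he]
      exact Rat.den_dvd k (M' : ℤ)
    have : q.den ∣ M' := Int.ofNat_dvd.mp hdvd
    exact le_trans (Nat.le_of_dvd hM'1 this) hM'2
  refine ⟨q, hqμ, hqden, ?_⟩
  intro q' hd' hlo hhi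
  by_contra hne
  -- |q' - q| ≥ 1/(q'.den * q.den) ≥ 1/M²
  have hrne : q' - q ≠ 0 := sub_ne_zero.mpr hne
  have hrden : (q' - q).den ≤ q'.den * q.den := by
    have h := Rat.add_den_dvd q' (-q)
    rw [Rat.neg_den] at h
    have : (q' + -q) = q' - q := by ring
    rw [this] at h
    exact Nat.le_of_dvd (Nat.mul_pos q'.den_pos q.den_pos) h
  have hnum1 : (1 : ℚ) ≤ |q' - q| * ((q' - q).den : ℚ) := by
    have habs : |q' - q| * ((q' - q).den : ℚ) = |(q' - q).num| := by
      rw [← abs_of_pos (show (0:ℚ) < ((q' - q).den : ℚ) by exact_mod_cast (q' - q).pos),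
        ← abs_mul, Rat.mul_den_eq_num, Int.cast_abs]
    rw [habs]
    have : (q' - q).num ≠ 0 := Rat.num_ne_zero.mpr hrne
    exact_mod_cast Int.one_le_abs (by exact_mod_cast this)
  have habs_lb : (1 : ℚ) / (M : ℚ) ^ 2 ≤ |q' - q| := by
    have hd : ((q' - q).den : ℚ) ≤ (M : ℚ) ^ 2 := by
      have : (q' - q).den ≤ M * M := le_trans hrden (Nat.mul_le_mul hd' hqden)
      calc ((q' - q).den : ℚ) ≤ ((M * M : ℕ) : ℚ) := by exact_mod_cast this
      _ = (M : ℚ) ^ 2 := by push_cast; ring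
    have hM2 : (0 : ℚ) < (M : ℚ) ^ 2 := by positivity
    rw [div_le_iff₀ hM2]
    calc (1 : ℚ) ≤ |q' - q| * ((q' - q).den : ℚ) := hnum1
    _ ≤ |q' - q| * (M : ℚ) ^ 2 := by
        exact mul_le_mul_of_nonneg_left hd (abs_nonneg _)
  -- transfer to ℝ
  have habs_lbR : (1 : ℝ) / (M : ℝ) ^ 2 ≤ |(q' : ℝ) - (q : ℝ)| := by
    have := habs_lb
    have h2 : ((|q' - q| : ℚ) : ℝ) = |(q' : ℝ) - (q : ℝ)| := by rw [Rat.cast_abs, Rat.cast_sub]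
    calc (1 : ℝ) / (M : ℝ) ^ 2 = (((1 : ℚ) / (M : ℚ) ^ 2 : ℚ) : ℝ) := by push_cast; ring
    _ ≤ ((|q' - q| : ℚ) : ℝ) := by exact_mod_cast this
    _ = |(q' : ℝ) - (q : ℝ)| := h2
  -- upper bounds from the interval
  have hub1 : (q' : ℝ) - (q : ℝ) ≤ 1 / (M : ℝ) ^ 2 := by
    rw [hqμ]; linarith
  have hub2 : (q : ℝ) - (q' : ℝ) < 1 / (M : ℝ) ^ 2 := by
    rw [hqμ]; linarith
  -- so q' - q = 1/M² exactly
  have heq : (q' : ℝ) - (q : ℝ) = 1 / (M : ℝ) ^ 2 := by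
    rcases abs_cases ((q' : ℝ) - (q : ℝ)) with ⟨h, _⟩ | ⟨h, _⟩ <;> rw [h] at habs_lbR <;> linarith
  -- and denominators both equal M
  have hdenprod : q'.den * q.den = M * M := by
    have hle : q'.den * q.den ≤ M * M := Nat.mul_le_mul hd' hqden
    by_contra hlt'
    have hlt2 : q'.den * q.den < M * M := lt_of_le_of_ne hle hlt'
    -- then 1/(den·den) > 1/M², contradicting |q'-q| = 1/M²
    have hd : ((q' - q).den : ℚ) ≤ ((q'.den * q.den : ℕ) : ℚ) := by exact_mod_cast hrden
    have h1q : (1 : ℚ) ≤ |q' - q| * ((q'.den * q.den : ℕ) : ℚ) := by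
      calc (1 : ℚ) ≤ |q' - q| * ((q' - q).den : ℚ) := hnum1
      _ ≤ _ := mul_le_mul_of_nonneg_left hd (abs_nonneg _)
    have heqQ : |q' - q| = 1 / (M : ℚ) ^ 2 := by
      have h0 : ((q' - q : ℚ) : ℝ) = 1 / (M : ℝ) ^ 2 := by push_cast; linarith [heq]
      have h1' : (q' - q : ℚ) = 1 / (M : ℚ) ^ 2 := by
        apply (Rat.cast_injective (α := ℝ))
        push_cast; linarith [h0]
      rw [h1', abs_of_pos (by positivity)]
    rw [heqQ] at h1q
    have hMQ : (0:ℚ) < (M:ℚ)^2 := by positivity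
    rw [div_mul_eq_mul_div, one_mul, le_div_iff₀ hMQ, one_mul] at h1q
    have : (M : ℚ) * M ≤ ((q'.den * q.den : ℕ) : ℚ) := by
      calc (M:ℚ) * M = (M:ℚ)^2 := by ring
      _ ≤ _ := h1q
    have : M * M ≤ q'.den * q.den := by exact_mod_cast this
    omega
  have hdq' : q'.den = M := by
    have := Nat.mul_le_mul hd' hqden
    rcases Nat.lt_or_ge q'.den M with h | h
    · exfalso
      have : q'.den * q.den < M * M :=
        Nat.mul_lt_mul_of_lt_of_le h hqden (by omega)
      omega
    · omega
  have hdq : q.den = M := by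
    rcases Nat.lt_or_ge q.den M with h | h
    · exfalso; rw [hdq'] at hdenprod; nlinarith [hdenprod]
    · omega
  -- final contradiction: q' = q + 1/M² forces M ∣ 1
  have heqQ : q' - q = 1 / (M : ℚ) ^ 2 := by
    apply (Rat.cast_injective (α := ℝ))
    push_cast; linarith [heq]
  have hnum' : q' * q'.den = (q'.num : ℚ) := Rat.mul_den_eq_num q'
  have hnumq : q * q.den = (q.num : ℚ) := Rat.mul_den_eq_num q
  rw [hdq'] at hnum'
  rw [hdq] at hnumq
  have hfin : (q'.num : ℚ) * M = (q.num : ℚ) * M + 1 := by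
    have key : q' * (M:ℚ)^2 - q * (M:ℚ)^2 = 1 := by
      rw [← sub_mul, heqQ, div_mul_cancel₀ _ (by positivity : ((M:ℚ)^2) ≠ 0)]
    have e1 : q' * (M:ℚ)^2 = (q'.num:ℚ) * M := by rw [pow_two, ← mul_assoc, hnum']
    have e2 : q * (M:ℚ)^2 = (q.num:ℚ) * M := by rw [pow_two, ← mul_assoc, hnumq]
    linarith [key, e1, e2]
  have hfinZ : q'.num * (M : ℤ) = q.num * (M : ℤ) + 1 := by exact_mod_cast hfin
  have : (M : ℤ) ∣ 1 := ⟨q'.num - q.num, by linarith [hfinZ, mul_sub (M:ℤ) q'.num q.num]⟩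
  have := Int.le_of_dvd one_pos this
  omega
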